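/- arXiv:1604.07628 — 3 statements merged into one kernel-verified Lean document; each statement's English description precedes it below -/
import Mathlib

section
/- For all nonnegative integers n ≥ 1 and j, the identity n * ∑_{i=0}^{j} ((-j)_i (1-n)_i / ((2)_i i!)) 2^i = ∑_{i=0}^{j} 2^i * C(j,i) * C(n, i+1) holds, where the left side is n · ₂F₁(-j, 1-n; 2; 2). -/
open Finset

/-- Pochhammer (rising factorial) symbol `(x)_n`. -/
def poch (x : ℚ) (n : ℕ) : ℚ := ∏ k ∈ Finset.range n, (x + k)

lemma poch_succ (x : ℚ) (n : ℕ) : poch x (n + 1) = poch x n * (x + n) :=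
  Finset.prod_range_succ _ _

lemma poch_two (i : ℕ) : poch 2 i = ((i + 1).factorial : ℚ) := by
  induction i with
  | zero => simp [poch]
  | succ k ih =>
    rw [poch_succ, ih]
    push_cast [Nat.factorial_succ]
    ring

lemma poch_neg_nat (m i : ℕ) :
    poch (-(m : ℚ)) i = (-1) ^ i * (i.factorial : ℚ) * (m.choose i : ℚ) := by
  induction i with
  | zero => simp [poch]
  | succ k ih =>
    rw [poch_succ, ih]
    rcases le_or_gt (k + 1) m with h | h
    · have hk : k ≤ m := Nat.le_of_succ_le h
      have hc : (m.choose (k + 1) : ℚ) * (k + 1) = (m.choose k : ℚ) * ((m : ℚ) - k) := by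
        have := congrArg (Nat.cast : ℕ → ℚ) (Nat.choose_succ_right_eq m k)
        push_cast [Nat.cast_sub hk] at this
        linarith
      rw [Nat.factorial_succ]
      push_cast
      linear_combination ((-1 : ℚ)) ^ k * (k.factorial : ℚ) * hc
    · rcases Nat.lt_succ_iff_lt_or_eq.mp h with h' | h'
      · rw [Nat.choose_eq_zero_of_lt h', Nat.choose_eq_zero_of_lt (Nat.lt_succ_of_lt h')]
        ring
      · subst h'
        rw [Nat.choose_eq_zero_of_lt (Nat.lt_succ_self m)]
        simp
/-- For nonnegative integers `n ≥ 1` and `j`,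
`n · ₂F₁(-j, 1-n; 2; 2) = ∑_{i=0}^{j} 2^i C(j,i) C(n, i+1)`. -/
theorem n_mul_hypergeometric_eq_sum (n j : ℕ) (hn : 1 ≤ n) :
    (n : ℚ) * ∑ i ∈ Finset.range (j + 1),
        poch (-(j : ℚ)) i * poch (1 - (n : ℚ)) i / (poch 2 i * (i.factorial : ℚ)) * 2 ^ i =
      ∑ i ∈ Finset.range (j + 1),
        (2 : ℚ) ^ i * (j.choose i : ℚ) * (n.choose (i + 1) : ℚ) := by
  rw [Finset.mul_sum]
  apply Finset.sum_congr rfl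
  intro i _
  have h1 : (1 - (n : ℚ)) = -((n - 1 : ℕ) : ℚ) := by
    push_cast [Nat.cast_sub hn]
    ring
  rw [h1, poch_neg_nat, poch_neg_nat, poch_two]
  have key : (n : ℚ) * ((n - 1).choose i : ℚ) = (n.choose (i + 1) : ℚ) * (i + 1) := by
    have h := Nat.add_one_mul_choose_eq (n - 1) i
    have hs : n - 1 + 1 = n := by omega
    simp only [Nat.succ_eq_add_one, hs] at h
    exact_mod_cast h
  have hfact : ((i + 1).factorial : ℚ) = (i + 1) * (i.factorial : ℚ) := by
    rw [Nat.factorial_succ]; push_cast; ring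
  have hne : (i.factorial : ℚ) ≠ 0 := Nat.cast_ne_zero.mpr i.factorial_ne_zero
  have hne1 : ((i : ℚ) + 1) ≠ 0 := by positivity
  rw [hfact]
  field_simp
  have hsq : ((-1 : ℚ)) ^ i * (-1) ^ i = 1 := by
    rw [← pow_add, ← two_mul, pow_mul]
    norm_num
  linear_combination ((n : ℚ) * (j.choose i : ℚ) *
      ((n - 1).choose i : ℚ)) * hsq +
    ((j.choose i : ℚ)) * key
end

section
/- For all nonnegative integers j and n, the identity ₂F₁(-j-1,-n;1;2) = ₂F₁(-j,-n;1;2) + ₂F₁(-j-1,1-n;1;2) + ₂F₁(-j,1-n;1;2) holds for the terminating hypergeometric sums at z = 2. -/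
open Finset

/-- The terminating hypergeometric sum `₂F₁(-j, b; c; z) = ∑_{k=0}^{j} (-j)_k (b)_k z^k / ((c)_k k!)`. -/
def hypF (j : ℕ) (b c z : ℚ) : ℚ :=
  ∑ k ∈ Finset.range (j + 1), poch (-(j : ℚ)) k * poch b k * z ^ k / (poch c k * (k.factorial : ℚ))

lemma poch_one (k : ℕ) : poch 1 k = (k.factorial : ℚ) := by
  induction k with
  | zero => simp [poch]
  | succ k ih =>
    rw [poch, Finset.prod_range_succ, ← poch, ih, Nat.factorial_succ]
    push_cast; ring

lemma poch_neg_nat_s4 (n k : ℕ) : poch (-(n : ℚ)) k = (-1) ^ k * (n.descFactorial k : ℚ) := by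
  induction k with
  | zero => simp [poch]
  | succ k ih =>
    rw [poch, Finset.prod_range_succ, ← poch, ih, Nat.descFactorial_succ]
    rcases Nat.lt_trichotomy k n with h | h | h
    · have : ((n - k : ℕ) : ℚ) = (n : ℚ) - k := by
        have : k ≤ n := by omega
        push_cast [this]; ring_nf
      rw [Nat.cast_mul, this]; push_cast; ring
    · subst h; simp
    · have : n.descFactorial k = 0 := Nat.descFactorial_eq_zero_iff_lt.mpr h
      simp [this]

lemma hypF_neg (j n : ℕ) : hypF j (-(n : ℚ)) 1 2 =
    ∑ k ∈ Finset.range (j + 1), 2 ^ k * (j.choose k : ℚ) * (n.choose k : ℚ) := by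
  unfold hypF
  refine Finset.sum_congr rfl fun k _ => ?_
  rw [poch_one, poch_neg_nat_s4, poch_neg_nat_s4, Nat.descFactorial_eq_factorial_mul_choose,
    Nat.descFactorial_eq_factorial_mul_choose]
  have hk : (k.factorial : ℚ) ≠ 0 := by exact_mod_cast k.factorial_ne_zero
  have hsq : ((-1:ℚ))^k * (-1)^k = 1 := by
    rw [← pow_add, ← two_mul, pow_mul]; norm_num
  field_simp
  push_cast
  linear_combination ((k.factorial:ℚ) * (j.choose k) * ((k.factorial:ℚ) * (n.choose k))) * hsq

lemma hypF_one (j : ℕ) : hypF j 1 1 2 = (-1) ^ j := by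
  unfold hypF
  have : ∀ k ∈ Finset.range (j + 1),
      poch (-(j : ℚ)) k * poch 1 k * 2 ^ k / (poch 1 k * (k.factorial : ℚ)) =
      (-2) ^ k * 1 ^ (j - k) * (j.choose k : ℚ) := by
    intro k _
    rw [poch_one, poch_neg_nat_s4, Nat.descFactorial_eq_factorial_mul_choose]
    have hk : (k.factorial : ℚ) ≠ 0 := by exact_mod_cast k.factorial_ne_zero
    field_simp
    rw [show ((-2:ℚ))^k = (-1)^k * 2^k from by rw [← neg_one_mul, mul_pow]]
    push_cast; ring
  rw [Finset.sum_congr rfl this, ← add_pow]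
  norm_num

/-- Key recurrence (Delannoy). -/
lemma S_rec (j n : ℕ) :
    ∑ k ∈ Finset.range (j + 2), 2 ^ k * ((j+1).choose k : ℚ) * ((n+1).choose k : ℚ) =
    (∑ k ∈ Finset.range (j + 1), 2 ^ k * (j.choose k : ℚ) * ((n+1).choose k : ℚ)) +
    (∑ k ∈ Finset.range (j + 2), 2 ^ k * ((j+1).choose k : ℚ) * (n.choose k : ℚ)) +
    (∑ k ∈ Finset.range (j + 1), 2 ^ k * (j.choose k : ℚ) * (n.choose k : ℚ)) := by
  -- extend the j-range sums to j+2
  have hext : ∀ m : ℕ, (∑ k ∈ Finset.range (j + 1), 2 ^ k * (j.choose k : ℚ) * (m.choose k : ℚ))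
      = ∑ k ∈ Finset.range (j + 2), 2 ^ k * (j.choose k : ℚ) * (m.choose k : ℚ) := by
    intro m
    rw [Finset.sum_range_succ (fun k => 2 ^ k * (j.choose k : ℚ) * (m.choose k : ℚ)) (j+1)]
    simp [Nat.choose_succ_self]
  rw [hext, hext]
  -- peel off k = 0 everywhere
  rw [Finset.sum_range_succ' _ (j+1), Finset.sum_range_succ' _ (j+1),
    Finset.sum_range_succ' _ (j+1), Finset.sum_range_succ' _ (j+1)]
  simp only [Nat.choose_succ_succ, Nat.choose_zero_right]
  push_cast
  -- now reduce to telescoping fact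
  have key : ∑ k ∈ Finset.range (j + 1), (2:ℚ) ^ (k+1) * (j.choose (k+1) : ℚ) * (n.choose (k+1) : ℚ)
      = (∑ k ∈ Finset.range (j + 1), 2 ^ k * (j.choose k : ℚ) * (n.choose k : ℚ)) - 1 := by
    have h1 : ∑ k ∈ Finset.range (j + 2), (2:ℚ) ^ k * (j.choose k : ℚ) * (n.choose k : ℚ)
        = (∑ k ∈ Finset.range (j + 1), (2:ℚ) ^ (k+1) * (j.choose (k+1) : ℚ) * (n.choose (k+1) : ℚ)) + 1 := by
      rw [Finset.sum_range_succ' _ (j+1)]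
      norm_num
    have h2 : ∑ k ∈ Finset.range (j + 2), (2:ℚ) ^ k * (j.choose k : ℚ) * (n.choose k : ℚ)
        = ∑ k ∈ Finset.range (j + 1), (2:ℚ) ^ k * (j.choose k : ℚ) * (n.choose k : ℚ) := by
      rw [Finset.sum_range_succ]
      simp [Nat.choose_succ_self]
    linarith [h1, h2]
  have expand : ∀ k ∈ Finset.range (j+1),
      (2:ℚ) ^ (k+1) * (((j.choose k : ℚ)) + (j.choose (k+1) : ℚ)) * (((n.choose k : ℚ)) + (n.choose (k+1) : ℚ))
      = (2 ^ (k+1) * (j.choose (k+1) : ℚ) * (((n.choose k : ℚ)) + (n.choose (k+1) : ℚ)))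
        + (2 ^ (k+1) * (((j.choose k : ℚ)) + (j.choose (k+1) : ℚ)) * (n.choose (k+1) : ℚ))
        + (2 ^ (k+1) * (j.choose (k+1) : ℚ) * (n.choose (k+1) : ℚ))
        + (2 * (2 ^ k * (j.choose k : ℚ) * (n.choose k : ℚ))
           - 2 * (2 ^ (k+1) * (j.choose (k+1) : ℚ) * (n.choose (k+1) : ℚ))) := by
    intro k _
    ring
  rw [Finset.sum_congr rfl expand]
  rw [Finset.sum_add_distrib, Finset.sum_add_distrib, Finset.sum_add_distrib,
    Finset.sum_sub_distrib, ← Finset.mul_sum, ← Finset.mul_sum, key]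
  ring

/-- `₂F₁(-j-1,-n;1;2) = ₂F₁(-j,-n;1;2) + ₂F₁(-j-1,1-n;1;2) + ₂F₁(-j,1-n;1;2)`. -/
theorem hypergeometric_four_term (j n : ℕ) :
    hypF (j + 1) (-(n : ℚ)) 1 2 =
      hypF j (-(n : ℚ)) 1 2 + hypF (j + 1) (1 - (n : ℚ)) 1 2 + hypF j (1 - (n : ℚ)) 1 2 := by
  cases n with
  | zero =>
    have h1 : (1 - ((0:ℕ) : ℚ)) = 1 := by norm_num
    have hz : ∀ m : ℕ, (∑ k ∈ Finset.range (m + 1), 2 ^ k * (m.choose k : ℚ) * ((0:ℕ).choose k : ℚ)) = 1 := by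
      intro m
      rw [Finset.sum_eq_single_of_mem 0 (Finset.mem_range.mpr (Nat.succ_pos m))]
      · simp
      · intro k _ hk
        rcases Nat.exists_eq_succ_of_ne_zero hk with ⟨l, rfl⟩
        simp [Nat.choose_eq_zero_of_lt]
    rw [h1, hypF_one, hypF_one, hypF_neg, hypF_neg, hz, hz]
    rw [pow_succ]
    ring
  | succ m =>
    have h1 : (1 - ((m+1:ℕ) : ℚ)) = -(m : ℚ) := by push_cast; ring
    rw [h1, hypF_neg, hypF_neg, hypF_neg, hypF_neg]
    have := S_rec j m
    push_cast at this ⊢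
    linarith [this]
end

section
/- For each j ≥ 0 define γ*(n) = ∑_{i=0}^{j} 2^i C(j,i) C(n-1,i) (as a polynomial in n). Then these satisfy the recursion (n+2)·γ*_{j}(n+3) = (2j+1)·(γ*_{j+1}(n+2) - γ*_{j+1}(n+1)) - (n+1)·(γ*_{j}(n+2) - γ*_{j}(n+1)) + n·γ*_{j}(n) for all integers n ≥ 0 and j ≥ 0, where γ*_j(m) = ∑_{i=0}^{j} 2^i C(j,i) C(m-1,i). -/
open Finset

/-- Generalized binomial coefficient `C(x, i)`. -/
def gchoose (x : ℚ) (i : ℕ) : ℚ := (∏ k ∈ Finset.range i, (x - k)) / (i.factorial : ℚ)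

/-- `γ*_j(m) = ∑_{i=0}^{j} 2^i C(j,i) C(m-1,i) = ₂F₁(-j, 1-m; 1; 2)`. -/
def gammaStar (j m : ℕ) : ℚ :=
  ∑ i ∈ Finset.range (j + 1), (2 : ℚ) ^ i * (j.choose i : ℚ) * gchoose ((m : ℚ) - 1) i

lemma gchoose_zero (x : ℚ) : gchoose x 0 = 1 := by simp [gchoose]

lemma fact_ne (i : ℕ) : (i.factorial : ℚ) ≠ 0 := by
  exact_mod_cast Nat.factorial_ne_zero i

lemma prod_shift (x : ℚ) (i : ℕ) :
    ∏ k ∈ range (i+1), (x - (k:ℚ)) = (∏ k ∈ range i, (x - 1 - (k:ℚ))) * x := by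
  rw [Finset.prod_range_succ' (fun k => x - (k:ℚ))]
  simp only [Nat.cast_zero, sub_zero]
  congr 1
  refine Finset.prod_congr rfl fun k _ => ?_
  push_cast; ring

lemma gchoose_absorb (x : ℚ) (i : ℕ) :
    ((i:ℚ)+1) * gchoose x (i+1) = (x - i) * gchoose x i := by
  unfold gchoose
  rw [Finset.prod_range_succ, Nat.factorial_succ]
  push_cast
  field_simp

lemma gchoose_pascal (x : ℚ) (i : ℕ) :
    gchoose (x + 1) (i + 1) = gchoose x (i + 1) + gchoose x i := by
  unfold gchoose
  have h1 : ∏ k ∈ range (i+1), (x + 1 - (k:ℚ)) = (∏ k ∈ range i, (x - (k:ℚ))) * (x+1) := by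
    have h := prod_shift (x+1) i
    simpa using h
  rw [h1, Finset.prod_range_succ, Nat.factorial_succ]
  push_cast
  field_simp
  ring

lemma gchoose_down (x : ℚ) (i : ℕ) :
    x * gchoose (x - 1) i = ((i:ℚ)+1) * gchoose x (i+1) := by
  unfold gchoose
  rw [prod_shift x i, Nat.factorial_succ]
  push_cast
  field_simp

lemma gchoose_mulx (x : ℚ) (i : ℕ) :
    x * gchoose x i = ((i:ℚ)+1) * gchoose x (i+1) + (i:ℚ) * gchoose x i := by
  linear_combination (-1 : ℚ) * gchoose_absorb x i

def shiftc (c : ℕ → ℚ) : ℕ → ℚ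
  | 0 => 0
  | (i+1) => c i

def P (K : ℕ) (c : ℕ → ℚ) (x : ℚ) : ℚ := ∑ i ∈ range K, c i * gchoose x i

lemma P_pad {K K' : ℕ} (c : ℕ → ℚ) (x : ℚ) (h : K ≤ K') (hc : ∀ i, K ≤ i → c i = 0) :
    P K c x = P K' c x := by
  unfold P
  refine Finset.sum_subset (Finset.range_subset_range.2 h) fun i _ hi => ?_
  rw [hc i (by simpa using hi)]; ring

lemma P_up (K : ℕ) (d : ℕ → ℚ) (x : ℚ) :
    ∑ i ∈ range K, d i * gchoose x (i+1) = P (K+1) (shiftc d) x := by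
  unfold P
  rw [Finset.sum_range_succ']
  simp [shiftc]

lemma P_diff (K : ℕ) (c : ℕ → ℚ) (x : ℚ) :
    P (K+1) c (x+1) = P (K+1) c x + P K (fun i => c (i+1)) x := by
  unfold P
  rw [Finset.sum_range_succ' (fun i => c i * gchoose (x+1) i),
      Finset.sum_range_succ' (fun i => c i * gchoose x i)]
  rw [Finset.sum_congr rfl (fun i (_ : i ∈ range K) => by
    rw [gchoose_pascal x i] :
    ∀ i ∈ range K, c (i+1) * gchoose (x+1) (i+1)
      = c (i+1) * (gchoose x (i+1) + gchoose x i))]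
  simp only [mul_add, Finset.sum_add_distrib, gchoose_zero]
  ring

lemma P_dn (K : ℕ) (c : ℕ → ℚ) (x : ℚ) :
    x * P K c (x - 1) = P (K+1) (shiftc (fun i => ((i:ℚ)+1) * c i)) x := by
  rw [← P_up]
  unfold P
  rw [Finset.mul_sum]
  refine Finset.sum_congr rfl fun i _ => ?_
  rw [← mul_assoc, mul_comm x (c i), mul_assoc, gchoose_down]
  ring

lemma P_mul (K : ℕ) (c : ℕ → ℚ) (x : ℚ) (hc : c K = 0) :
    x * P (K+1) c x
      = P (K+1) (fun m => shiftc (fun i => ((i:ℚ)+1) * c i) m + (m:ℚ) * c m) x := by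
  unfold P
  rw [Finset.mul_sum]
  rw [Finset.sum_congr rfl (fun i (_ : i ∈ range (K+1)) => by
      linear_combination c i * gchoose_mulx x i :
    ∀ i ∈ range (K+1), x * (c i * gchoose x i)
      = (((i:ℚ)+1) * c i) * gchoose x (i+1) + ((i:ℚ) * c i) * gchoose x i)]
  rw [Finset.sum_add_distrib]
  have h1 : ∑ i ∈ range (K+1), (((i:ℚ)+1) * c i) * gchoose x (i+1)
      = ∑ i ∈ range (K+1), shiftc (fun i => ((i:ℚ)+1) * c i) i * gchoose x i := by
    rw [Finset.sum_range_succ (fun i => (((i:ℚ)+1) * c i) * gchoose x (i+1)), hc,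
      P_up K (fun i => ((i:ℚ)+1) * c i) x]
    unfold P
    ring
  rw [h1, ← Finset.sum_add_distrib]
  refine Finset.sum_congr rfl fun i _ => ?_
  ring

lemma qabsorb (j m : ℕ) :
    ((j:ℚ) - m) * (j.choose m : ℚ) = ((m:ℚ)+1) * (j.choose (m+1) : ℚ) := by
  rcases le_or_gt m j with h | h
  · have h0 := Nat.choose_succ_right_eq j m
    have h1 : ((j.choose (m+1) * (m+1) : ℕ) : ℚ) = ((j.choose m * (j - m) : ℕ) : ℚ) := by
      exact_mod_cast congrArg (Nat.cast : ℕ → ℚ) h0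
    have h2 : ((j - m : ℕ) : ℚ) = (j:ℚ) - m := by
      exact Nat.cast_sub h
    push_cast at h1
    rw [h2] at h1
    linarith [h1]
  · rw [Nat.choose_eq_zero_of_lt h, Nat.choose_eq_zero_of_lt (Nat.lt_succ_of_lt h)]
    simp

lemma keyl (j m : ℕ) :
    2*(2*(j:ℚ)+1) * ((j+1).choose (m+1) : ℚ)
      = (4*(m:ℚ)+2)*(j.choose m : ℚ) + (8*(m:ℚ)+10)*(j.choose (m+1) : ℚ)
        + (4*(m:ℚ)+8)*(j.choose (m+2) : ℚ) := by
  have h1 := qabsorb j m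
  have h2 := qabsorb j (m+1)
  rw [Nat.choose_succ_succ]
  push_cast
  push_cast at h2
  linear_combination 4*h1 + 4*h2

def aC (j : ℕ) : ℕ → ℚ := fun i => (2:ℚ)^i * (j.choose i : ℚ)

lemma gammaStar_eq_P (j m : ℕ) : gammaStar j m = P (j+1) (aC j) ((m:ℚ) - 1) := rfl

lemma aC_supp (j : ℕ) : ∀ i, j+1 ≤ i → aC j i = 0 := fun i hi => by
  simp [aC, Nat.choose_eq_zero_of_lt hi]

-- coefficient families
def C1 (j : ℕ) : ℕ → ℚ :=
  fun m => shiftc (fun i => ((i:ℚ)+1) * aC j i) m + (m:ℚ) * aC j m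
def C1s (j : ℕ) : ℕ → ℚ := fun i => C1 j (i+1)
def C1ss (j : ℕ) : ℕ → ℚ := fun i => C1 j (i+2)
def Ap (j : ℕ) : ℕ → ℚ := fun i => aC j (i+1)
def Bp (j : ℕ) : ℕ → ℚ := fun i => aC (j+1) (i+1)
def E2 (j : ℕ) : ℕ → ℚ :=
  fun m => shiftc (fun i => ((i:ℚ)+1) * Ap j i) m + (m:ℚ) * Ap j m
def C3 (j : ℕ) : ℕ → ℚ := shiftc (fun i => ((i:ℚ)+1) * aC j i)

/-- The recursion for the matrix-resolvent coefficients with `v_n = 0`, `w_n = n`: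
`(n+2)·γ*_j(n+3) = (2j+1)·(γ*_{j+1}(n+2) - γ*_{j+1}(n+1)) - (n+1)·(γ*_j(n+2) - γ*_j(n+1)) + n·γ*_j(n)`. -/
theorem gammaStar_recursion (n j : ℕ) :
    ((n : ℚ) + 2) * gammaStar j (n + 3) =
      (2 * (j : ℚ) + 1) * (gammaStar (j + 1) (n + 2) - gammaStar (j + 1) (n + 1))
        - ((n : ℚ) + 1) * (gammaStar j (n + 2) - gammaStar j (n + 1))
        + (n : ℚ) * gammaStar j n := by
  have e3 : ((n+3:ℕ):ℚ) - 1 = ((n:ℚ)+1) + 1 := by push_cast; ring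
  have e2 : ((n+2:ℕ):ℚ) - 1 = (n:ℚ) + 1 := by push_cast; ring
  have e1 : ((n+1:ℕ):ℚ) - 1 = (n:ℚ) := by push_cast; ring
  simp only [gammaStar_eq_P, e3, e2, e1]
  set y : ℚ := (n : ℚ) with hy
  -- Block 1 : (y+2) * P (j+1) (aC j) (y+2)
  have hB1 : (y + 2) * P (j+1) (aC j) ((y+1)+1)
      = P (j+2) (C1 j) y + 2 * P (j+2) (C1s j) y + P (j+2) (C1ss j) y := by
    rw [P_pad (aC j) ((y+1)+1) (Nat.le_succ (j+1)) (aC_supp j)]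
    have hm : (y + 2) * P (j+2) (aC j) ((y+1)+1) = P (j+2) (C1 j) ((y+1)+1) := by
      have := P_mul (j+1) (aC j) ((y+1)+1) (aC_supp j (j+1) le_rfl)
      rw [show ((y+1)+1 : ℚ) = y + 2 by ring] at this ⊢
      exact this
    rw [hm, P_diff (j+1) (C1 j) (y+1)]
    have t1 : P (j+2) (C1 j) (y+1) = P (j+2) (C1 j) y + P (j+1) (C1s j) y := by
      have := P_diff (j+1) (C1 j) y
      exact this
    have t2 : P (j+1) (fun i => C1 j (i+1)) (y+1)
        = P (j+1) (C1s j) y + P j (C1ss j) y := by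
      have h := P_diff j (C1s j) y
      exact h
    rw [t1, t2]
    have p1 : P (j+1) (C1s j) y = P (j+2) (C1s j) y := by
      refine P_pad _ _ (Nat.le_succ _) fun i hi => ?_
      simp [C1s, C1, shiftc, aC_supp j i hi, aC_supp j (i+1) (by omega)]
    have p2 : P j (C1ss j) y = P (j+2) (C1ss j) y := by
      refine P_pad _ _ (by omega) fun i hi => ?_
      simp [C1ss, C1, shiftc, aC_supp j (i+1) (by omega), aC_supp j (i+2) (by omega)]
    rw [p1, p2]
    ring
  rw [hB1]
  -- RHS differences
  have hΔb : P (j+1+1) (aC (j+1)) (y+1) - P (j+1+1) (aC (j+1)) y = P (j+2) (Bp j) y := by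
    rw [P_diff (j+1) (aC (j+1)) y]
    have : P (j+1) (fun i => aC (j+1) (i+1)) y = P (j+2) (Bp j) y := by
      refine P_pad _ _ (Nat.le_succ _) fun i hi => ?_
      exact aC_supp (j+1) (i+1) (by omega)
    rw [← this]; ring
  have hΔa : P (j+1) (aC j) (y+1) - P (j+1) (aC j) y = P (j+2) (Ap j) y := by
    rcases j with _ | j'
    · -- j = 0
      rw [show (0+1) = 0 + 1 from rfl, P_diff 0 (aC 0) y]
      have : P 0 (fun i => aC 0 (i+1)) y = P 2 (Ap 0) y := by
        refine P_pad _ _ (by omega) fun i hi => aC_supp 0 (i+1) (by omega)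
      rw [← this]; ring
    · rw [P_diff j'.succ (aC j'.succ) y]
      have : P (j'+1) (fun i => aC (j'+1) (i+1)) y = P (j'+1+2) (Ap (j'+1)) y := by
        refine P_pad _ _ (by omega) fun i hi => aC_supp (j'+1) (i+1) (by omega)
      rw [← this]; ring
  rw [hΔb, hΔa]
  -- (y+1) * P (j+2) (Ap j) y = P (j+2) (E2 j) y + P (j+2) (Ap j) y
  have hE2 : (y+1) * P (j+2) (Ap j) y = P (j+2) (E2 j) y + P (j+2) (Ap j) y := by
    have := P_mul (j+1) (Ap j) y (by exact aC_supp j (j+2) (by omega))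
    have h2 : y * P (j+2) (Ap j) y = P (j+2) (E2 j) y := this
    linear_combination h2
  have hC3 : y * P (j+1) (aC j) (y - 1) = P (j+2) (C3 j) y := P_dn (j+1) (aC j) y
  rw [hE2, hC3]
  -- now everything is P (j+2) _ y ; reduce to coefficient identity
  unfold P
  simp only [Finset.mul_sum]
  rw [← Finset.sum_add_distrib, ← Finset.sum_add_distrib, ← Finset.sum_add_distrib,
    ← Finset.sum_sub_distrib, ← Finset.sum_add_distrib]
  refine Finset.sum_congr rfl fun m _ => ?_
  rcases m with _ | m
  · simp only [C1, C1s, C1ss, E2, Ap, Bp, C3, aC, shiftc]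
    push_cast
    linear_combination (-(gchoose y 0)) * keyl j 0
  · simp only [C1, C1s, C1ss, E2, Ap, Bp, C3, aC, shiftc]
    push_cast
    have k := keyl j (m+1)
    push_cast at k
    linear_combination (-(gchoose y (m+1))) * (2:ℚ)^(m+1) * k
end
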